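/- Let a₁, a₂, ... be nonnegative reals with Σ aᵢ = 1 and a = sup{aᵢ}. Then for any k ≥ 1 and 1 ≤ i ≤ k, Σ_{j₁+...+jᵢ=k, jₗ≥1} a_{j₁}⋯a_{jᵢ} ≤ a. -/
import Mathlib


open Filter Topology

/-- If `a₁, a₂, …` are nonnegative reals with `Σ aᵢ = 1` and `a = sup aᵢ`, then for any
`k ≥ 1` and `1 ≤ i ≤ k`, the sum of `a_{j₁}⋯a_{jᵢ}` over all `i`-tuples of positive
integers with `j₁+⋯+jᵢ = k` is at most `a`. -/
theorem stmt12 (a : ℕ → ℝ) (ha : ∀ j, 0 ≤ a j)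
    (hsum : HasSum (fun j : ℕ => a (j + 1)) 1)
    (k i : ℕ) (hk : 1 ≤ k) (hi1 : 1 ≤ i) (hik : i ≤ k) :
    ∑ f ∈ (Finset.Nat.antidiagonalTuple i k).filter (fun f => ∀ l, f l ≠ 0),
        ∏ l : Fin i, a (f l)
      ≤ ⨆ j : ℕ, a (j + 1) := by
  obtain ⟨i', rfl⟩ : ∃ i', i = i' + 1 := ⟨i - 1, by omega⟩
  set S := ⨆ j : ℕ, a (j + 1) with hS
  have hbdd : BddAbove (Set.range fun j : ℕ => a (j + 1)) := by
    refine ⟨1, ?_⟩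
    rintro x ⟨j, rfl⟩
    exact le_hasSum hsum j (fun m _ => ha _)
  have hSle : ∀ m, a (m + 1) ≤ S := fun m => le_ciSup hbdd m
  have hS0 : 0 ≤ S := le_trans (ha 1) (hSle 0)
  set T := (Finset.Nat.antidiagonalTuple (i' + 1) k).filter (fun f => ∀ l, f l ≠ 0) with hT
  have step1 : ∀ f ∈ T, ∏ l, a (f l) ≤ S * ∏ l : Fin i', a (f l.succ) := by
    intro f hf
    rw [hT, Finset.mem_filter] at hf
    rw [Fin.prod_univ_succ]
    gcongr
    · exact Finset.prod_nonneg fun l _ => ha _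
    · obtain ⟨m, hm⟩ : ∃ m, f 0 = m + 1 := ⟨f 0 - 1, by have := hf.2 0; omega⟩
      rw [hm]; exact hSle m
  have key : ∑ f ∈ T, ∏ l : Fin i', a (f l.succ) ≤ 1 := by
    set φ : (Fin (i' + 1) → ℕ) → (Fin i' → ℕ) := fun f l => f l.succ - 1 with hφ
    have hpos : ∀ f ∈ T, ∀ l : Fin (i' + 1), 1 ≤ f l := by
      intro f hf l
      rw [hT, Finset.mem_filter] at hf
      have := hf.2 l
      omega
    have hinj : Set.InjOn φ T := by
      intro f hf g hg hfg
      have hsumf : ∑ l, f l = k := by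
        have := Finset.mem_filter.mp hf
        simpa [Finset.Nat.mem_antidiagonalTuple] using this.1
      have hsumg : ∑ l, g l = k := by
        have := Finset.mem_filter.mp hg
        simpa [Finset.Nat.mem_antidiagonalTuple] using this.1
      have htail : ∀ l : Fin i', f l.succ = g l.succ := by
        intro l
        have h1 := congrFun hfg l
        have h2 := hpos f hf l.succ
        have h3 := hpos g hg l.succ
        simp only [hφ] at h1
        omega
      have hhead : f 0 = g 0 := by
        rw [Fin.sum_univ_succ] at hsumf hsumg
        have : ∑ l : Fin i', f l.succ = ∑ l : Fin i', g l.succ :=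
          Finset.sum_congr rfl fun l _ => htail l
        omega
      funext l
      induction l using Fin.cases with
      | zero => exact hhead
      | succ l => exact htail l
    have heq : ∑ f ∈ T, ∏ l : Fin i', a (f l.succ)
        = ∑ g ∈ T.image φ, ∏ l : Fin i', a (g l + 1) := by
      rw [Finset.sum_image (fun f hf g hg h => hinj hf hg h)]
      refine Finset.sum_congr rfl fun f hf => Finset.prod_congr rfl fun l _ => ?_
      have := hpos f hf l.succ
      congr 1
      simp only [hφ]
      omega
    have hsub : T.image φ ⊆ Fintype.piFinset (fun _ : Fin i' => Finset.range k) := by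
      intro g hg
      obtain ⟨f, hf, rfl⟩ := Finset.mem_image.mp hg
      rw [Fintype.mem_piFinset]
      intro l
      rw [Finset.mem_range]
      have hlk : f l.succ ≤ k := by
        have := Finset.mem_filter.mp hf
        have hmem : ∑ m, f m = k := by
          simpa [Finset.Nat.mem_antidiagonalTuple] using this.1
        calc f l.succ ≤ ∑ m, f m := Finset.single_le_sum (fun m _ => Nat.zero_le _)
              (Finset.mem_univ _)
          _ = k := hmem
      have := hpos f hf l.succ
      simp only [hφ]
      omega
    rw [heq]
    calc ∑ g ∈ T.image φ, ∏ l : Fin i', a (g l + 1)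
        ≤ ∑ g ∈ Fintype.piFinset (fun _ : Fin i' => Finset.range k),
            ∏ l : Fin i', a (g l + 1) :=
          Finset.sum_le_sum_of_subset_of_nonneg hsub
            (fun g _ _ => Finset.prod_nonneg fun l _ => ha _)
      _ = ∏ _l : Fin i', ∑ m ∈ Finset.range k, a (m + 1) := by
          rw [Finset.prod_univ_sum]
      _ ≤ 1 := by
          apply Finset.prod_le_one
          · intro l _
            exact Finset.sum_nonneg fun m _ => ha _
          · intro l _
            exact sum_le_hasSum _ (fun m _ => ha _) hsum
  calc ∑ f ∈ T, ∏ l, a (f l)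
      ≤ ∑ f ∈ T, S * ∏ l : Fin i', a (f l.succ) := Finset.sum_le_sum step1
    _ = S * ∑ f ∈ T, ∏ l : Fin i', a (f l.succ) := by rw [Finset.mul_sum]
    _ ≤ S * 1 := by
        apply mul_le_mul_of_nonneg_left key hS0
    _ = S := mul_one S
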